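/- Every simple graph with maximum degree Δ admits a proper edge coloring with at most Δ+1 colors (Vizing's theorem). -/

import Mathlib

set_option linter.unusedSectionVars false
set_option linter.unreachableTactic false
set_option linter.unusedTactic false
set_option linter.unnecessarySeqFocus false

attribute [local instance] Classical.propDecidable

namespace VizingProof

variable {V : Type*} [Fintype V] [DecidableEq V]

structure PC (G : SimpleGraph V) (n : ℕ) where
  f : V → V → Option (Fin n)
  symm : ∀ u v, f u v = f v u
  supp : ∀ u v a, f u v = some a → G.Adj u v
  proper : ∀ u v w a, f u v = some a → f u w = some a → v = w

variable {G : SimpleGraph V} {n : ℕ}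

def Free (c : PC G n) (v : V) (a : Fin n) : Prop := ∀ u, c.f v u ≠ some a

lemma exists_free [DecidableRel G.Adj] (hn : G.maxDegree < n) (c : PC G n) (v : V) :
    ∃ a, Free c v a := by
  by_contra h
  push_neg at h
  simp only [Free, not_forall, not_not] at h
  choose g hg using h
  have hinj : Function.Injective g := by
    intro a b hab
    have := (hg a).symm.trans (hab ▸ hg b)
    exact Option.some_injective _ this
  have hmem : ∀ a : Fin n, g a ∈ G.neighborFinset v := by
    intro a
    rw [SimpleGraph.mem_neighborFinset]
    exact c.supp _ _ _ (hg a)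
  have hcard : (Finset.univ : Finset (Fin n)).card ≤ (G.neighborFinset v).card :=
    Finset.card_le_card_of_injOn g (fun a _ => hmem a) (fun a _ b _ hab => hinj hab)
  rw [Finset.card_univ, Fintype.card_fin, SimpleGraph.card_neighborFinset_eq_degree] at hcard
  have := G.degree_le_maxDegree v
  omega

/-- Recolor edge x-z (both directions) with value o. -/
def upd (f : V → V → Option (Fin n)) (x z : V) (o : Option (Fin n)) :
    V → V → Option (Fin n) :=
  fun u v => if (u = x ∧ v = z) ∨ (u = z ∧ v = x) then o else f u v

lemma upd_ne {f : V → V → Option (Fin n)} {x z : V} {o : Option (Fin n)} {u v : V}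
    (h : ¬ ((u = x ∧ v = z) ∨ (u = z ∧ v = x))) : upd f x z o u v = f u v := if_neg h

lemma upd_eq {f : V → V → Option (Fin n)} {x z : V} {o : Option (Fin n)} :
    upd f x z o x z = o := by
  simp [upd]

/-- Recoloring one edge with a color free at both endpoints preserves properness. -/
def recolor (c : PC G n) (x z : V) (hadj : G.Adj x z) (γ : Fin n)
    (hx : Free c x γ) (hz : Free c z γ) : PC G n where
  f := upd c.f x z (some γ)
  symm := by
    intro u v
    unfold upd
    by_cases h : (u = x ∧ v = z) ∨ (u = z ∧ v = x) <;>
      [skip; rw [if_neg h, if_neg (by tauto), c.symm]] <;> rw [if_pos h, if_pos (by tauto)]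
  supp := by
    intro u v a h
    unfold upd at h
    by_cases h' : (u = x ∧ v = z) ∨ (u = z ∧ v = x)
    · rcases h' with ⟨rfl, rfl⟩ | ⟨rfl, rfl⟩
      · exact hadj
      · exact hadj.symm
    · rw [if_neg h'] at h; exact c.supp _ _ _ h
  proper := by
    intro u v w a h1 h2
    have hxz : x ≠ z := hadj.ne
    unfold upd at h1 h2
    by_cases p1 : (u = x ∧ v = z) ∨ (u = z ∧ v = x) <;>
      by_cases p2 : (u = x ∧ w = z) ∨ (u = z ∧ w = x)
    · rcases p1 with ⟨rfl, rfl⟩ | ⟨rfl, rfl⟩ <;> rcases p2 with ⟨h, rfl⟩ | ⟨h, rfl⟩ <;>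
        first | rfl | (exact absurd h (by tauto)) | (exact absurd h.symm hxz) | (exact absurd h hxz)
    · rw [if_pos p1] at h1; rw [if_neg p2] at h2
      exfalso
      rcases p1 with ⟨rfl, rfl⟩ | ⟨rfl, rfl⟩
      · exact hx w (h2 ▸ (by injection h1 with h; rw [h]))
      · exact hz w (h2 ▸ (by injection h1 with h; rw [h]))
    · rw [if_neg p1] at h1; rw [if_pos p2] at h2
      exfalso
      rcases p2 with ⟨rfl, rfl⟩ | ⟨rfl, rfl⟩
      · exact hx v (h1 ▸ (by injection h2 with h; rw [h]))
      · exact hz v (h1 ▸ (by injection h2 with h; rw [h]))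
    · rw [if_neg p1] at h1; rw [if_neg p2] at h2
      exact c.proper _ _ _ _ h1 h2

lemma recolor_f (c : PC G n) (x z : V) (hadj : G.Adj x z) (γ : Fin n)
    (hx : Free c x γ) (hz : Free c z γ) :
    (recolor c x z hadj γ hx hz).f = upd c.f x z (some γ) := rfl

/-- Fans at a vertex x, stored in reverse order (head = last fan vertex). -/
inductive Fan (c : PC G n) (x : V) : List V → Prop
  | base (y : V) (h : G.Adj x y) (h0 : c.f x y = none) : Fan c x [y]
  | cons (z y : V) (L : List V) (hf : Fan c x (y :: L)) (hadj : G.Adj x z)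
      (hnd : z ∉ y :: L) (β : Fin n) (hc : c.f x z = some β) (hfree : Free c y β) :
      Fan c x (z :: y :: L)

lemma Fan.ne_nil {c : PC G n} {x : V} {L : List V} (h : Fan c x L) : L ≠ [] := by
  cases h <;> simp

lemma Fan.nodup {c : PC G n} {x : V} {L : List V} (h : Fan c x L) : L.Nodup := by
  induction h with
  | base y h h0 => simp
  | cons z y L hf hadj hnd β hc hfree ih => exact List.nodup_cons.mpr ⟨hnd, ih⟩

lemma Fan.adj {c : PC G n} {x : V} {L : List V} (h : Fan c x L) :
    ∀ y ∈ L, G.Adj x y := by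
  induction h with
  | base y h h0 => simpa
  | cons z y L hf hadj hnd β hc hfree ih =>
      intro a ha
      rcases List.mem_cons.mp ha with rfl | ha
      · exact hadj
      · exact ih a ha

lemma Fan.last_none {c : PC G n} {x : V} {L : List V} (h : Fan c x L) :
    ∀ y₀, L.getLast? = some y₀ → c.f x y₀ = none := by
  induction h with
  | base y h h0 => intro y₀ hy; simp at hy; subst hy; exact h0
  | cons z y L hf hadj hnd β hc hfree ih =>
      intro y₀ hy
      rw [List.getLast?_cons_cons] at hy
      exact ih y₀ hy

lemma Fan.suffix {c : PC G n} {x : V} {L S : List V} (h : Fan c x L)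
    (hs : S <:+ L) (hne : S ≠ []) : Fan c x S := by
  induction h with
  | base y h h0 =>
      rcases List.suffix_cons_iff.mp hs with rfl | hs
      · exact Fan.base y h h0
      · simp at hs; exact absurd hs hne
  | cons z y L hf hadj hnd β hc hfree ih =>
      rcases List.suffix_cons_iff.mp hs with rfl | hs
      · exact Fan.cons z y L hf hadj hnd β hc hfree
      · exact ih hs

/-- Transfer a fan to a modified coloring which agrees on the relevant data. -/
lemma Fan.transfer {c c' : PC G n} {x : V} {L : List V} (h : Fan c x L)
    (H1 : ∀ a ∈ L, c'.f x a = c.f x a)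
    (H2 : ∀ z y β, [z, y] <:+: L → c.f x z = some β → Free c y β → Free c' y β) :
    Fan c' x L := by
  induction h with
  | base y h h0 =>
      exact Fan.base y h (by rw [H1 y (by simp)]; exact h0)
  | cons z y L hf hadj hnd β hc hfree ih =>
      refine Fan.cons z y L ?_ hadj hnd β ?_ ?_
      · refine ih ?_ ?_
        · intro a ha; exact H1 a (List.mem_cons_of_mem _ ha)
        · intro z' y' β' hinf hc' hfr'
          exact H2 z' y' β' (hinf.trans (List.suffix_cons z (y :: L)).isInfix) hc' hfr'
      · rw [H1 z (by simp)]; exact hc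
      · exact H2 z y β ⟨[], L, rfl⟩ hc hfree

/-- Rotation: if γ is free at x and at the head of the fan, we can recolor so that
all previously colored edges stay colored and the edge from x to the fan's last
vertex (the originally uncolored one) becomes colored. -/
lemma fan_rotate : ∀ (L : List V) (c : PC G n) {x : V}, Fan c x L →
    ∀ z₀, L.head? = some z₀ → ∀ γ, Free c z₀ γ → Free c x γ →
    ∃ c' : PC G n, (∀ u v, c.f u v ≠ none → c'.f u v ≠ none) ∧
      (∀ y₀, L.getLast? = some y₀ → c'.f x y₀ ≠ none) := by
  intro L
  induction L with
  | nil => intro c x h; exact absurd rfl h.ne_nil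
  | cons z rest ih =>
      intro c x h z₀ hz₀ γ hzf hxf
      simp only [List.head?_cons, Option.some.injEq] at hz₀
      subst hz₀
      cases rest with
      | nil =>
          have hadj : G.Adj x z := h.adj z (by simp)
          refine ⟨recolor c x z hadj γ hxf hzf, ?_, ?_⟩
          · intro u v hne
            rw [recolor_f]
            by_cases hcase : (u = x ∧ v = z) ∨ (u = z ∧ v = x)
            · simp only [upd]; rw [if_pos hcase]; simp
            · rw [upd_ne hcase]; exact hne
          · intro y₀ hy₀
            simp only [List.getLast?_singleton, Option.some.injEq] at hy₀
            subst hy₀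
            rw [recolor_f, upd_eq]; simp
      | cons y L =>
          -- invert the fan
          rcases h with _ | ⟨_, _, _, hf, hadj, hnd, β, hc, hfree⟩
          have hxz : x ≠ z := hadj.ne
          set c₁ := recolor c x z hadj γ hxf hzf with hc₁
          have hx_edges : ∀ a ∈ y :: L, c₁.f x a = c.f x a := by
            intro a ha
            rw [hc₁, recolor_f]
            exact upd_ne (by
              rintro (⟨-, rfl⟩ | ⟨h1, -⟩)
              · exact hnd ha
              · exact hxz h1)
          have ha_edges : ∀ a ∈ y :: L, ∀ u, c₁.f a u = c.f a u := by
            intro a ha u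
            have hax : a ≠ x := (hf.adj a ha).ne'
            have haz : a ≠ z := fun hh => hnd (hh ▸ ha)
            rw [hc₁, recolor_f]
            exact upd_ne (by tauto)
          have hfan1 : Fan c₁ x (y :: L) := by
            refine hf.transfer hx_edges ?_
            intro z' y' β' hinf hc' hfr' u
            have hy' : y' ∈ y :: L := hinf.subset (by simp)
            rw [ha_edges y' hy']
            exact hfr' u
          have hγβ : γ ≠ β := by
            intro hh; exact hxf z (hh ▸ hc)
          have h1 : Free c₁ y β := by
            intro u; rw [ha_edges y (by simp)]; exact hfree u
          have h2 : Free c₁ x β := by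
            intro u
            by_cases hu : u = z
            · subst hu
              rw [hc₁, recolor_f, upd_eq]
              simp only [ne_eq, Option.some.injEq]
              exact hγβ
            · rw [hc₁, recolor_f, upd_ne (by tauto)]
              intro hh
              exact hu (c.proper x u z β hh hc)
          obtain ⟨c', hdom, hlast⟩ := ih c₁ hfan1 y (by simp) β h1 h2
          refine ⟨c', ?_, ?_⟩
          · intro u v hne
            refine hdom u v ?_
            rw [hc₁, recolor_f]
            by_cases hcase : (u = x ∧ v = z) ∨ (u = z ∧ v = x)
            · simp only [upd]; rw [if_pos hcase]; simp
            · rw [upd_ne hcase]; exact hne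
          · intro y₀ hy₀
            rw [List.getLast?_cons_cons] at hy₀
            exact hlast y₀ hy₀

/-- a maximal fan through a given uncolored edge -/
lemma exists_maximal_fan (c : PC G n) (x y₀ : V) (hadj : G.Adj x y₀)
    (h0 : c.f x y₀ = none) :
    ∃ L z₀, Fan c x L ∧ L.head? = some z₀ ∧ L.getLast? = some y₀ ∧
      (∀ u β, G.Adj x u → c.f x u = some β → Free c z₀ β → u ∈ L) := by
  suffices h : ∀ k (L : List V), Fan c x L → L.getLast? = some y₀ →
      Fintype.card V ≤ L.length + k →
      ∃ L' z₀, Fan c x L' ∧ L'.head? = some z₀ ∧ L'.getLast? = some y₀ ∧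
        (∀ u β, G.Adj x u → c.f x u = some β → Free c z₀ β → u ∈ L') by
    exact h (Fintype.card V) [y₀] (Fan.base y₀ hadj h0) (by simp) (by simp)
  intro k
  induction k with
  | zero =>
      intro L hL hlast hlen
      have hnodup := hL.nodup
      have hle : L.length ≤ Fintype.card V := hnodup.length_le_card
      have hall : ∀ v : V, v ∈ L := by
        intro v
        have h1 : L.toFinset.card = L.length := List.toFinset_card_of_nodup hnodup
        have h2 : L.toFinset = Finset.univ := by
          apply Finset.eq_univ_of_card
          omega
        rw [← List.mem_toFinset, h2]
        exact Finset.mem_univ v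
      obtain ⟨z₀, T, rfl⟩ : ∃ z₀ T, L = z₀ :: T := by
        cases L with
        | nil => exact absurd rfl hL.ne_nil
        | cons a T => exact ⟨a, T, rfl⟩
      exact ⟨z₀ :: T, z₀, hL, rfl, hlast, fun u _ _ _ _ => hall u⟩
  | succ k ihk =>
      intro L hL hlast hlen
      obtain ⟨z₀, T, rfl⟩ : ∃ z₀ T, L = z₀ :: T := by
        cases L with
        | nil => exact absurd rfl hL.ne_nil
        | cons a T => exact ⟨a, T, rfl⟩
      by_cases hext : ∃ u β, G.Adj x u ∧ c.f x u = some β ∧ Free c z₀ β ∧ u ∉ z₀ :: T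
      · obtain ⟨u, β, huadj, huc, hufree, humem⟩ := hext
        have hfan : Fan c x (u :: z₀ :: T) :=
          Fan.cons u z₀ T hL huadj humem β huc hufree
        refine ihk (u :: z₀ :: T) hfan ?_ ?_
        · rw [List.getLast?_cons_cons]; exact hlast
        · simp only [List.length_cons] at hlen ⊢; omega
      · push_neg at hext
        exact ⟨z₀ :: T, z₀, hL, rfl, hlast, fun u β h1 h2 h3 => hext u β h1 h2 h3⟩


section Swap

variable (c : PC G n) (α β : Fin n) (x₀ : V)

/-- The subgraph of edges colored α or β. -/
def chainGraph : SimpleGraph V where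
  Adj u v := c.f u v = some α ∨ c.f u v = some β
  symm := by
    constructor
    intro u v h
    rwa [c.symm] at h
  loopless := by
    constructor
    intro u h
    rcases h with h | h <;> exact (G.loopless.irrefl u) (c.supp _ _ _ h)

lemma chainGraph_adj {u v : V} :
    (chainGraph c α β).Adj u v ↔ (c.f u v = some α ∨ c.f u v = some β) := Iff.rfl

noncomputable def swapFun : V → V → Option (Fin n) := fun u v =>
  if (chainGraph c α β).Reachable x₀ u then
    (if c.f u v = some α then some β else if c.f u v = some β then some α else c.f u v)
  else c.f u v

lemma swapFun_eq_of_ne {u v : V} (h1 : c.f u v ≠ some α) (h2 : c.f u v ≠ some β) :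
    swapFun c α β x₀ u v = c.f u v := by
  unfold swapFun
  split_ifs <;> rfl

lemma swapFun_eq_of_not_reach {u : V} (h : ¬ (chainGraph c α β).Reachable x₀ u) (v : V) :
    swapFun c α β x₀ u v = c.f u v := by
  unfold swapFun
  rw [if_neg h]

lemma swapFun_none {u v : V} : swapFun c α β x₀ u v = none ↔ c.f u v = none := by
  unfold swapFun
  split_ifs with h1 h2 h3 <;> simp_all

lemma swapFun_alpha (hαβ : α ≠ β) {u v : V} :
    swapFun c α β x₀ u v = some α ↔
      (((chainGraph c α β).Reachable x₀ u ∧ c.f u v = some β) ∨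
       (¬ (chainGraph c α β).Reachable x₀ u ∧ c.f u v = some α)) := by
  unfold swapFun
  split_ifs with h1 h2 h3 <;> simp_all [eq_comm, Ne.symm hαβ]

lemma swapFun_beta (hαβ : α ≠ β) {u v : V} :
    swapFun c α β x₀ u v = some β ↔
      (((chainGraph c α β).Reachable x₀ u ∧ c.f u v = some α) ∨
       (¬ (chainGraph c α β).Reachable x₀ u ∧ c.f u v = some β)) := by
  unfold swapFun
  split_ifs with h1 h2 h3 <;> simp_all [eq_comm, Ne.symm hαβ]

lemma swapFun_other {a : Fin n} (ha : a ≠ α) (hb : a ≠ β) {u v : V} :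
    swapFun c α β x₀ u v = some a ↔ c.f u v = some a := by
  unfold swapFun
  split_ifs with h1 h2 h3
  · rw [h2]; simp [Ne.symm ha, Ne.symm hb]
  · rw [h3]; simp [Ne.symm ha, Ne.symm hb]
  · rfl
  · rfl

/-- The swapped coloring. -/
noncomputable def PC.swap (hαβ : α ≠ β) : PC G n where
  f := swapFun c α β x₀
  symm := by
    intro u v
    by_cases hin : c.f u v = some α ∨ c.f u v = some β
    · have hR : (chainGraph c α β).Reachable x₀ u ↔ (chainGraph c α β).Reachable x₀ v := by
        constructor
        · intro h; exact h.trans (SimpleGraph.Adj.reachable hin)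
        · intro h; exact h.trans (SimpleGraph.Adj.reachable (SimpleGraph.Adj.symm (G := chainGraph c α β) hin))
      show (if _ then _ else _) = (if _ then _ else _)
      rw [c.symm u v]
      exact if_congr hR rfl rfl
    · push_neg at hin
      show swapFun c α β x₀ u v = swapFun c α β x₀ v u
      rw [swapFun_eq_of_ne c α β x₀ hin.1 hin.2,
        swapFun_eq_of_ne c α β x₀ (by rw [c.symm]; exact hin.1) (by rw [c.symm]; exact hin.2),
        c.symm]
  supp := by
    intro u v a h
    have hne : c.f u v ≠ none := by
      intro hn
      rw [← swapFun_none c α β x₀] at hn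
      rw [h] at hn
      simp at hn
    obtain ⟨b, hb⟩ := Option.ne_none_iff_exists'.mp hne
    exact c.supp _ _ _ hb
  proper := by
    intro u v w a h1 h2
    by_cases haα : a = α
    · rw [haα, swapFun_alpha c α β x₀ hαβ] at h1 h2
      rcases h1 with ⟨hr, h1⟩ | ⟨hr, h1⟩ <;> rcases h2 with ⟨hr2, h2⟩ | ⟨hr2, h2⟩ <;>
        first
          | exact c.proper _ _ _ _ h1 h2
          | exact absurd hr2 hr
          | exact absurd hr hr2
    · by_cases haβ : a = β
      · rw [haβ, swapFun_beta c α β x₀ hαβ] at h1 h2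
        rcases h1 with ⟨hr, h1⟩ | ⟨hr, h1⟩ <;> rcases h2 with ⟨hr2, h2⟩ | ⟨hr2, h2⟩ <;>
          first
            | exact c.proper _ _ _ _ h1 h2
            | exact absurd hr2 hr
            | exact absurd hr hr2
      · rw [swapFun_other c α β x₀ haα haβ] at h1 h2
        exact c.proper _ _ _ _ h1 h2

lemma swap_f (hαβ : α ≠ β) : (PC.swap c α β x₀ hαβ).f = swapFun c α β x₀ := rfl

lemma swap_free_of_not_reach (hαβ : α ≠ β) {u : V}
    (h : ¬ (chainGraph c α β).Reachable x₀ u) {a : Fin n} (hf : Free c u a) :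
    Free (PC.swap c α β x₀ hαβ) u a := by
  intro v
  rw [swap_f, swapFun_eq_of_not_reach c α β x₀ h]
  exact hf v

lemma swap_free_beta (hαβ : α ≠ β) {u : V}
    (hr : (chainGraph c α β).Reachable x₀ u) (hf : Free c u α) :
    Free (PC.swap c α β x₀ hαβ) u β := by
  intro v
  rw [swap_f, ne_eq, swapFun_beta c α β x₀ hαβ]
  rintro (⟨-, h⟩ | ⟨h, -⟩)
  · exact hf v h
  · exact h hr

lemma swap_free_alpha (hαβ : α ≠ β) {u : V}
    (hr : (chainGraph c α β).Reachable x₀ u) (hf : Free c u β) :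
    Free (PC.swap c α β x₀ hαβ) u α := by
  intro v
  rw [swap_f, ne_eq, swapFun_alpha c α β x₀ hαβ]
  rintro (⟨-, h⟩ | ⟨h, -⟩)
  · exact hf v h
  · exact h hr

lemma swap_free_other (hαβ : α ≠ β) {u : V} {a : Fin n} (ha : a ≠ α) (hb : a ≠ β)
    (hf : Free c u a) : Free (PC.swap c α β x₀ hαβ) u a := by
  intro v
  rw [swap_f, ne_eq, swapFun_other c α β x₀ ha hb]
  exact hf v

lemma swap_dom (hαβ : α ≠ β) {u v : V} (h : c.f u v ≠ none) :
    (PC.swap c α β x₀ hαβ).f u v ≠ none := by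
  rw [swap_f, ne_eq, swapFun_none]
  exact h

/-- Chain degrees are at most 2, and at most 1 at vertices missing α or β. -/
lemma chain_deg_le_two (v : V) :
    (Finset.univ.filter (fun u => (chainGraph c α β).Adj v u)).card ≤ 2 := by
  classical
  have key : (Finset.univ.filter (fun u => (chainGraph c α β).Adj v u)).card ≤
      ({some α, some β} : Finset (Option (Fin n))).card := by
    apply Finset.card_le_card_of_injOn (fun u => c.f v u)
    · intro u hu
      simp only [Finset.mem_coe, Finset.mem_filter, Finset.mem_univ, true_and, chainGraph_adj] at hu
      simp only [Finset.mem_coe, Finset.mem_insert, Finset.mem_singleton]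
      exact hu
    · intro u hu w hw huw
      simp only [Finset.mem_coe, Finset.mem_filter, Finset.mem_univ, true_and,
        chainGraph_adj] at hu hw
      have huw' : c.f v u = c.f v w := huw
      rcases hu with hu | hu <;> exact c.proper v u w _ hu (huw' ▸ hu)
  calc _ ≤ _ := key
    _ ≤ 2 := (Finset.card_insert_le _ _).trans (by simp)

lemma chain_deg_le_one_alpha {v : V} (hf : Free c v α) :
    (Finset.univ.filter (fun u => (chainGraph c α β).Adj v u)).card ≤ 1 := by
  classical
  have key : (Finset.univ.filter (fun u => (chainGraph c α β).Adj v u)).card ≤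
      ({some β} : Finset (Option (Fin n))).card := by
    apply Finset.card_le_card_of_injOn (fun u => c.f v u)
    · intro u hu
      simp only [Finset.mem_coe, Finset.mem_filter, Finset.mem_univ, true_and, chainGraph_adj] at hu
      simp only [Finset.mem_coe, Finset.mem_singleton]
      rcases hu with hu | hu
      · exact absurd hu (hf u)
      · exact hu
    · intro u hu w hw huw
      simp only [Finset.mem_coe, Finset.mem_filter, Finset.mem_univ, true_and,
        chainGraph_adj] at hu hw
      have huw' : c.f v u = c.f v w := huw
      rcases hu with hu | hu <;> exact c.proper v u w _ hu (huw' ▸ hu)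
  simpa using key

lemma chain_deg_le_one_beta {v : V} (hf : Free c v β) :
    (Finset.univ.filter (fun u => (chainGraph c α β).Adj v u)).card ≤ 1 := by
  classical
  have key : (Finset.univ.filter (fun u => (chainGraph c α β).Adj v u)).card ≤
      ({some α} : Finset (Option (Fin n))).card := by
    apply Finset.card_le_card_of_injOn (fun u => c.f v u)
    · intro u hu
      simp only [Finset.mem_coe, Finset.mem_filter, Finset.mem_univ, true_and, chainGraph_adj] at hu
      simp only [Finset.mem_coe, Finset.mem_singleton]
      rcases hu with hu | hu
      · exact hu
      · exact absurd hu (hf u)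
    · intro u hu w hw huw
      simp only [Finset.mem_coe, Finset.mem_filter, Finset.mem_univ, true_and,
        chainGraph_adj] at hu hw
      have huw' : c.f v u = c.f v w := huw
      rcases hu with hu | hu <;> exact c.proper v u w _ hu (huw' ▸ hu)
  simpa using key

end Swap

section Counting

/-- In a graph with maximum degree 2, a connected component cannot contain three
distinct vertices of degree at most 1. -/
lemma no_three_endpoints {H : SimpleGraph V}
    (hdeg : ∀ v, (Finset.univ.filter (fun u => H.Adj v u)).card ≤ 2)
    {x y z : V} (hxy : x ≠ y) (hxz : x ≠ z) (hyz : y ≠ z)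
    (h1 : (Finset.univ.filter (fun u => H.Adj x u)).card ≤ 1)
    (h2 : (Finset.univ.filter (fun u => H.Adj y u)).card ≤ 1)
    (h3 : (Finset.univ.filter (fun u => H.Adj z u)).card ≤ 1)
    (hr1 : H.Reachable x y) (hr2 : H.Reachable x z) : False := by
  classical
  set S : Finset V := Finset.univ.filter (fun v => H.Reachable x v) with hS
  have hmemS : ∀ v, v ∈ S ↔ H.Reachable x v := by
    intro v; simp [hS]
  have hxS : x ∈ S := (hmemS x).mpr (SimpleGraph.Reachable.refl x)
  have hyS : y ∈ S := (hmemS y).mpr hr1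
  have hzS : z ∈ S := (hmemS z).mpr hr2
  -- parent function
  have hpar : ∀ v, H.Reachable x v → v ≠ x → ∃ u, H.Adj u v ∧ H.dist x u + 1 = H.dist x v := by
    intro v hr hvx
    obtain ⟨p, hp⟩ := hr.exists_walk_length_eq_dist
    have hd : 0 < H.dist x v := hr.pos_dist_of_ne (Ne.symm hvx)
    obtain ⟨w, hadj, q, hq⟩ := p.reverse.exists_eq_cons_of_ne hvx
    have hlen : q.length + 1 = H.dist x v := by
      have := congrArg SimpleGraph.Walk.length hq
      rw [SimpleGraph.Walk.length_reverse, hp] at this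
      simp only [SimpleGraph.Walk.length_cons] at this
      omega
    have hle : H.dist x w ≤ q.length := by
      have := SimpleGraph.dist_le q.reverse
      simpa using this
    have hge : H.dist x v ≤ H.dist x w + 1 := by
      have hrxw : H.Reachable x w := ⟨q.reverse⟩
      obtain ⟨r, hrlen⟩ := hrxw.exists_walk_length_eq_dist
      have hcon := SimpleGraph.dist_le (r.concat hadj.symm)
      rwa [SimpleGraph.Walk.length_concat, hrlen] at hcon
    exact ⟨w, hadj.symm, by omega⟩
  choose! par hparAdj hparDist using fun v (h : v ∈ S.erase x) =>
    hpar v ((hmemS v).mp (Finset.mem_of_mem_erase h)) (Finset.ne_of_mem_erase h)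
  -- edge pair sets
  set A : Finset (V × V) := (S ×ˢ S).filter (fun q => H.Adj q.1 q.2) with hA
  have hparS : ∀ v ∈ S.erase x, par v ∈ S := by
    intro v hv
    rw [hmemS]
    exact ((hmemS v).mp (Finset.mem_of_mem_erase hv)).trans (hparAdj v hv).symm.reachable
  set P1 : Finset (V × V) := (S.erase x).image (fun v => (par v, v)) with hP1
  set P2 : Finset (V × V) := (S.erase x).image (fun v => (v, par v)) with hP2
  have hP1card : P1.card = (S.erase x).card := by
    rw [hP1]
    apply Finset.card_image_of_injOn
    intro a _ b _ hab
    exact (Prod.mk.injEq _ _ _ _ ▸ hab).2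
  have hP2card : P2.card = (S.erase x).card := by
    rw [hP2]
    apply Finset.card_image_of_injOn
    intro a _ b _ hab
    exact (Prod.mk.injEq _ _ _ _ ▸ hab).1
  have hP1sub : P1 ⊆ A := by
    intro q hq
    rw [hP1, Finset.mem_image] at hq
    obtain ⟨v, hv, rfl⟩ := hq
    rw [hA, Finset.mem_filter, Finset.mem_product]
    exact ⟨⟨hparS v hv, Finset.mem_of_mem_erase hv⟩, hparAdj v hv⟩
  have hP2sub : P2 ⊆ A := by
    intro q hq
    rw [hP2, Finset.mem_image] at hq
    obtain ⟨v, hv, rfl⟩ := hq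
    rw [hA, Finset.mem_filter, Finset.mem_product]
    exact ⟨⟨Finset.mem_of_mem_erase hv, hparS v hv⟩, (hparAdj v hv).symm⟩
  have hdisj : Disjoint P1 P2 := by
    rw [Finset.disjoint_left]
    intro q hq1 hq2
    rw [hP1, Finset.mem_image] at hq1
    rw [hP2, Finset.mem_image] at hq2
    obtain ⟨v, hv, hveq⟩ := hq1
    obtain ⟨w, hw, hweq⟩ := hq2
    have d1 := hparDist v hv
    have d2 := hparDist w hw
    have e1 : par v = w := by rw [← hweq] at hveq; exact (Prod.mk.injEq _ _ _ _ ▸ hveq).1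
    have e2 : v = par w := by rw [← hweq] at hveq; exact (Prod.mk.injEq _ _ _ _ ▸ hveq).2
    rw [e1] at d1
    rw [← e2] at d2
    omega
  have hlower : 2 * (S.card - 1) ≤ A.card := by
    have h1 : (P1 ∪ P2).card = P1.card + P2.card := Finset.card_union_of_disjoint hdisj
    have h2 : (P1 ∪ P2) ⊆ A := Finset.union_subset hP1sub hP2sub
    have h3 := Finset.card_le_card h2
    have h4 : (S.erase x).card = S.card - 1 := Finset.card_erase_of_mem hxS
    omega
  -- upper bound
  have hupper : A.card ≤ 2 * S.card - 3 := by
    have hfib : A.card = ∑ v ∈ S, (A.filter (fun q => q.1 = v)).card := by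
      apply Finset.card_eq_sum_card_fiberwise
      intro q hq
      rw [hA, Finset.mem_coe, Finset.mem_filter, Finset.mem_product] at hq
      exact hq.1.1
    have hfible : ∀ v, (A.filter (fun q => q.1 = v)).card ≤
        (Finset.univ.filter (fun u => H.Adj v u)).card := by
      intro v
      apply Finset.card_le_card_of_injOn (fun q => q.2)
      · intro q hq
        simp only [hA, Finset.mem_coe, Finset.mem_filter, Finset.mem_product] at hq
        simp only [Finset.mem_coe, Finset.mem_filter, Finset.mem_univ, true_and]
        rw [← hq.2]
        exact hq.1.2
      · intro q hq r hr hqr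
        simp only [Finset.mem_coe, Finset.mem_filter] at hq hr
        have : q.1 = r.1 := hq.2.trans hr.2.symm
        exact Prod.ext this hqr
    set T : Finset V := {x, y, z} with hT
    have hTsub : T ⊆ S := by
      intro v hv
      rw [hT] at hv
      simp only [Finset.mem_insert, Finset.mem_singleton] at hv
      rcases hv with rfl | rfl | rfl <;> assumption
    have hTcard : T.card = 3 := by
      rw [hT]
      rw [Finset.card_insert_of_notMem (by simp [hxy, hxz]),
        Finset.card_insert_of_notMem (by simp [hyz])]
      simp
    have hsum : ∑ v ∈ S, (A.filter (fun q => q.1 = v)).card =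
        ∑ v ∈ T, (A.filter (fun q => q.1 = v)).card +
        ∑ v ∈ S \ T, (A.filter (fun q => q.1 = v)).card := by
      rw [add_comm, Finset.sum_sdiff hTsub]
    have hsumT : ∑ v ∈ T, (A.filter (fun q => q.1 = v)).card ≤ 3 := by
      rw [hT, Finset.sum_insert (by simp [hxy, hxz]), Finset.sum_insert (by simp [hyz]),
        Finset.sum_singleton]
      have e1 := (hfible x).trans h1
      have e2 := (hfible y).trans h2
      have e3 := (hfible z).trans h3
      omega
    have hsumR : ∑ v ∈ S \ T, (A.filter (fun q => q.1 = v)).card ≤ 2 * (S \ T).card := by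
      calc ∑ v ∈ S \ T, (A.filter (fun q => q.1 = v)).card
          ≤ ∑ _v ∈ S \ T, 2 := Finset.sum_le_sum (fun v _ => (hfible v).trans (hdeg v))
        _ = (S \ T).card * 2 := by rw [Finset.sum_const, smul_eq_mul]
        _ = 2 * (S \ T).card := by ring
    have hcardST : (S \ T).card = S.card - 3 := by
      rw [Finset.card_sdiff_of_subset hTsub, hTcard]
    have hScard : 3 ≤ S.card := hTcard ▸ Finset.card_le_card hTsub
    omega
  have hScard : 3 ≤ S.card := by
    have hTsub : ({x, y, z} : Finset V) ⊆ S := by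
      intro v hv
      simp only [Finset.mem_insert, Finset.mem_singleton] at hv
      rcases hv with rfl | rfl | rfl <;> assumption
    have : ({x, y, z} : Finset V).card = 3 := by
      rw [Finset.card_insert_of_notMem (by simp [hxy, hxz]),
        Finset.card_insert_of_notMem (by simp [hyz])]
      simp
    exact this ▸ Finset.card_le_card hTsub
  omega

end Counting

lemma succ_unique : ∀ (l : List V), l.Nodup → ∀ w y1 y2 : V,
    (∃ s t, l = s ++ w :: y1 :: t) → (∃ s t, l = s ++ w :: y2 :: t) → y1 = y2 := by
  intro l
  induction l with
  | nil =>
      rintro - w y1 y2 ⟨s, t, hs⟩ -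
      exact absurd hs.symm (by simp)
  | cons a l ih =>
      rintro hnd w y1 y2 ⟨s1, t1, e1⟩ ⟨s2, t2, e2⟩
      rw [List.nodup_cons] at hnd
      cases s1 with
      | nil =>
          simp only [List.nil_append, List.cons.injEq] at e1
          obtain ⟨rfl, rfl⟩ := e1
          cases s2 with
          | nil =>
              simp only [List.nil_append, List.cons.injEq] at e2
              exact e2.2.1
          | cons b s2' =>
              simp only [List.cons_append, List.cons.injEq] at e2
              exfalso
              apply hnd.1
              rw [e2.2]
              exact List.mem_append_right _ (by simp)
      | cons b s1' =>
          simp only [List.cons_append, List.cons.injEq] at e1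
          cases s2 with
          | nil =>
              simp only [List.nil_append, List.cons.injEq] at e2
              exfalso
              apply hnd.1
              rw [e1.2, ← e2.1]
              exact List.mem_append_right _ (by simp)
          | cons d s2' =>
              simp only [List.cons_append, List.cons.injEq] at e2
              exact ih hnd.2 w y1 y2 ⟨s1', t1, e1.2⟩ ⟨s2', t2, e2.2⟩

/-- The key extension lemma: any uncolored edge can be colored after recoloring. -/
lemma extend [DecidableRel G.Adj] (hn : G.maxDegree < n) (c : PC G n) (x y₀ : V)
    (hadj : G.Adj x y₀) (hnone : c.f x y₀ = none) :
    ∃ c' : PC G n, (∀ u v, c.f u v ≠ none → c'.f u v ≠ none) ∧ c'.f x y₀ ≠ none := by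
  classical
  obtain ⟨M, z₀, hfan, hhead, hlast, hmax⟩ := exists_maximal_fan c x y₀ hadj hnone
  obtain ⟨β, hβ⟩ := exists_free hn c z₀
  have hz₀M : z₀ ∈ M := by
    cases M with
    | nil => simp at hhead
    | cons a T =>
        simp only [List.head?_cons, Option.some.injEq] at hhead
        rw [← hhead]
        exact List.mem_cons_self
  have hxz₀ : x ≠ z₀ := (hfan.adj z₀ hz₀M).ne
  by_cases hxβ : Free c x β
  · obtain ⟨c', hdom, hl⟩ := fan_rotate M c hfan z₀ hhead β hβ hxβ
    exact ⟨c', hdom, hl y₀ hlast⟩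
  -- β is used at x, say on edge x-w
  simp only [Free, not_forall, not_not] at hxβ
  obtain ⟨w, hw⟩ := hxβ
  have hwadj : G.Adj x w := c.supp _ _ _ hw
  have hwM : w ∈ M := hmax w β hwadj hw hβ
  have hwz₀ : w ≠ z₀ := by
    rintro rfl
    apply hβ x
    rw [c.symm]
    exact hw
  obtain ⟨A, B, hM⟩ := List.append_of_mem hwM
  have hBne : B ≠ [] := by
    rintro rfl
    have hlw : M.getLast? = some w := by
      rw [hM]
      rw [List.getLast?_append]
      simp
    rw [hlast] at hlw
    have : y₀ = w := by injection hlw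
    rw [← this] at hw
    rw [hnone] at hw
    cases hw
  obtain ⟨b, B', rfl⟩ : ∃ b B', B = b :: B' := by
    cases B with
    | nil => exact absurd rfl hBne
    | cons b B' => exact ⟨b, B', rfl⟩
  subst hM
  -- suffix fan at w
  have hfanw : Fan c x (w :: b :: B') := hfan.suffix ⟨A, rfl⟩ (by simp)
  rcases hfanw with _ | ⟨_, _, _, hfanb, hwadj', hwnd, β', hc', hfree'⟩
  have hββ' : β' = β := by
    rw [hw] at hc'
    injection hc' with h
    exact h.symm
  rw [hββ'] at hfree' hc'
  -- the fan's last? for the suffix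
  obtain ⟨t₀, ht₀⟩ : ∃ t₀, (b :: B').getLast? = some t₀ :=
    Option.isSome_iff_exists.mp (List.getLast?_isSome.mpr (by simp))
  have hty₀ : t₀ = y₀ := by
    have : ((A ++ [w]) ++ b :: B').getLast? = some y₀ := by
      rw [show (A ++ [w]) ++ b :: B' = A ++ w :: b :: B' by simp]
      exact hlast
    rw [List.getLast?_append, ht₀] at this
    injection this
  subst hty₀
  -- α free at x
  obtain ⟨α, hα⟩ := exists_free hn c x
  have hαβ : α ≠ β := by
    rintro rfl
    exact hα w hw
  -- distinctness
  have hxb : x ≠ b := (hfanb.adj b (by simp)).ne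
  have hbz₀ : b ≠ z₀ := by
    intro hbz
    cases A with
    | nil =>
        simp only [List.nil_append, List.head?_cons, Option.some.injEq] at hhead
        exact hwz₀ hhead
    | cons a A' =>
        simp only [List.cons_append, List.head?_cons, Option.some.injEq] at hhead
        have hnod := hfan.nodup
        rw [List.cons_append, List.nodup_cons] at hnod
        apply hnod.1
        rw [hhead, ← hbz]
        exact List.mem_append_right _ (by simp)
  have hz₀b : z₀ ≠ b := fun h => hbz₀ h.symm
  -- chain graph degrees
  have hdeg2 := chain_deg_le_two c α β
  have hdegx := chain_deg_le_one_alpha c α β hα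
  have hdegb := chain_deg_le_one_beta c α β hfree'
  have hdegz₀ := chain_deg_le_one_beta c α β hβ
  by_cases hreach : (chainGraph c α β).Reachable x b
  · -- swap on the component of z₀ and rotate the whole fan with α
    have hnreach : ¬ (chainGraph c α β).Reachable x z₀ := by
      intro h
      exact no_three_endpoints hdeg2 hxb hxz₀ hbz₀ hdegx hdegb hdegz₀ hreach h
    have hnrx : ¬ (chainGraph c α β).Reachable z₀ x := fun h => hnreach h.symm
    have hnrb : ¬ (chainGraph c α β).Reachable z₀ b := by
      intro h
      exact hnreach (hreach.trans h.symm)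
    set c₁ := PC.swap c α β z₀ hαβ with hc₁
    have hfan₁ : Fan c₁ x (A ++ w :: b :: B') := by
      refine hfan.transfer ?_ ?_
      · intro a _
        rw [hc₁, swap_f, swapFun_eq_of_not_reach c α β z₀ hnrx]
      · intro z' y' β'' hinf hcz' hfry' 
        by_cases hβα : β'' = α
        · exact absurd hcz' (hβα ▸ hα z')
        by_cases hββ : β'' = β
        · rw [hββ] at hcz' hfry' ⊢
          have hz'w : z' = w := c.proper x z' w β hcz' hw
          subst hz'w
          have hy'b : y' = b := by
            obtain ⟨s, t, hst⟩ := hinf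
            refine succ_unique _ hfan.nodup z' y' b ⟨s, t, by rw [← hst]; simp⟩ ⟨A, B', rfl⟩
          subst hy'b
          exact swap_free_of_not_reach c α β z₀ hαβ hnrb hfry'
        · exact swap_free_other c α β z₀ hαβ hβα hββ hfry'
    have hfree₁z : Free c₁ z₀ α :=
      swap_free_alpha c α β z₀ hαβ (SimpleGraph.Reachable.refl z₀) hβ
    have hfree₁x : Free c₁ x α := swap_free_of_not_reach c α β z₀ hαβ hnrx hα
    obtain ⟨c₂, hdom₂, hl₂⟩ := fan_rotate (A ++ w :: b :: B') c₁ hfan₁ z₀ hhead α hfree₁z hfree₁x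
    refine ⟨c₂, ?_, hl₂ t₀ hlast⟩
    intro u v hne
    exact hdom₂ u v (swap_dom c α β z₀ hαβ hne)
  · -- swap on the component of x and rotate the partial fan (b :: B') with β
    set c₁ := PC.swap c α β x hαβ with hc₁
    have hrxx : (chainGraph c α β).Reachable x x := SimpleGraph.Reachable.refl x
    have hfan₁ : Fan c₁ x (b :: B') := by
      refine hfanb.transfer ?_ ?_
      · intro a ha
        rw [hc₁, swap_f]
        apply swapFun_eq_of_ne
        · exact hα a
        · intro hcb
          have : a = w := c.proper x a w β hcb hw
          exact hwnd (this ▸ ha)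
      · intro z' y' β'' hinf hcz' hfry'
        have hz'mem : z' ∈ b :: B' := hinf.subset (by simp)
        have hβα : β'' ≠ α := by
          rintro rfl
          exact hα z' hcz'
        have hββ : β'' ≠ β := by
          intro he
          rw [he] at hcz'
          have : z' = w := c.proper x z' w β hcz' hw
          exact hwnd (this ▸ hz'mem)
        exact swap_free_other c α β x hαβ hβα hββ hfry'
    have hfree₁b : Free c₁ b β := swap_free_of_not_reach c α β x hαβ hreach hfree'
    have hfree₁x : Free c₁ x β := swap_free_beta c α β x hαβ hrxx hα
    obtain ⟨c₂, hdom₂, hl₂⟩ := fan_rotate (b :: B') c₁ hfan₁ b (by simp) β hfree₁b hfree₁x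
    refine ⟨c₂, ?_, hl₂ t₀ ht₀⟩
    intro u v hne
    exact hdom₂ u v (swap_dom c α β x hαβ hne)



lemma exists_total [DecidableRel G.Adj] (hn : G.maxDegree < n) :
    ∃ c : PC G n, ∀ u v, G.Adj u v → c.f u v ≠ none := by
  classical
  let c₀ : PC G n := ⟨fun _ _ => none, fun _ _ => rfl, fun u v a h => (by cases h),
    fun u v w a h _ => (by cases h)⟩
  suffices h : ∀ (m : ℕ) (c : PC G n),
      (Finset.univ.filter (fun p : V × V => G.Adj p.1 p.2 ∧ c.f p.1 p.2 = none)).card ≤ m →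
      ∃ c' : PC G n, ∀ u v, G.Adj u v → c'.f u v ≠ none by
    exact h _ c₀ le_rfl
  intro m
  induction m with
  | zero =>
      intro c hc
      refine ⟨c, fun u v huv hnone => ?_⟩
      have hmem : (u, v) ∈ Finset.univ.filter
          (fun p : V × V => G.Adj p.1 p.2 ∧ c.f p.1 p.2 = none) := by
        simp [huv, hnone]
      rw [Finset.card_eq_zero.mp (Nat.le_zero.mp hc)] at hmem
      simp at hmem
  | succ m ih =>
      intro c hc
      by_cases hex : ∃ p : V × V, G.Adj p.1 p.2 ∧ c.f p.1 p.2 = none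
      · obtain ⟨⟨u, v⟩, huv, hval⟩ := hex
        obtain ⟨c', hdom, hcol⟩ := extend hn c u v huv hval
        apply ih c'
        have hsub : (Finset.univ.filter
              (fun p : V × V => G.Adj p.1 p.2 ∧ c'.f p.1 p.2 = none)) ⊆
            (Finset.univ.filter
              (fun p : V × V => G.Adj p.1 p.2 ∧ c.f p.1 p.2 = none)).erase (u, v) := by
          intro p hp
          simp only [Finset.mem_filter, Finset.mem_univ, true_and] at hp
          rw [Finset.mem_erase]
          constructor
          · rintro rfl
            exact hcol hp.2
          · simp only [Finset.mem_filter, Finset.mem_univ, true_and]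
            refine ⟨hp.1, ?_⟩
            by_contra hne
            exact hdom p.1 p.2 hne hp.2
        have hmem : (u, v) ∈ Finset.univ.filter
            (fun p : V × V => G.Adj p.1 p.2 ∧ c.f p.1 p.2 = none) := by
          simp [huv, hval]
        have h1 := Finset.card_le_card hsub
        have h2 := Finset.card_erase_of_mem hmem
        have h3 : 1 ≤ (Finset.univ.filter
            (fun p : V × V => G.Adj p.1 p.2 ∧ c.f p.1 p.2 = none)).card :=
          Finset.card_pos.mpr ⟨(u, v), hmem⟩
        omega
      · push_neg at hex
        exact ⟨c, fun u v huv h0 => hex (u, v) huv h0⟩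

end VizingProof

open VizingProof in
/-- Vizing's theorem: every finite simple graph with maximum degree `Δ` admits a proper
edge coloring with at most `Δ + 1` colors. -/
theorem vizing {V : Type*} [Fintype V] [DecidableEq V]
    (G : SimpleGraph V) [DecidableRel G.Adj] :
    ∃ c : G.edgeFinset → Fin (G.maxDegree + 1),
      ∀ e f : G.edgeFinset, e ≠ f →
        (∃ v : V, v ∈ (e : Sym2 V) ∧ v ∈ (f : Sym2 V)) → c e ≠ c f := by
  classical
  obtain ⟨ct, hct⟩ := exists_total (G := G) (n := G.maxDegree + 1) (Nat.lt_succ_self _)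
  set g : Sym2 V → Option (Fin (G.maxDegree + 1)) :=
    Sym2.lift ⟨ct.f, fun a b => ct.symm a b⟩ with hg
  have hglift : ∀ u v : V, g s(u, v) = ct.f u v := by
    intro u v; rw [hg, Sym2.lift_mk]
  have hsome : ∀ e : Sym2 V, e ∈ G.edgeFinset → (g e).isSome := by
    intro e he
    induction e with
    | _ u v =>
        rw [SimpleGraph.mem_edgeFinset, SimpleGraph.mem_edgeSet] at he
        rw [hglift]
        exact Option.isSome_iff_ne_none.mpr (hct u v he)
  refine ⟨fun e => (g e.val).get (hsome e.val e.prop), ?_⟩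
  rintro ⟨e, he⟩ ⟨f, hf⟩ hne ⟨v, hve, hvf⟩ heq
  simp only [ne_eq, Subtype.mk.injEq] at hne
  obtain ⟨a, rfl⟩ := Sym2.mem_iff_exists.mp hve
  obtain ⟨b, rfl⟩ := Sym2.mem_iff_exists.mp hvf
  have hab : a ≠ b := fun h => hne (by rw [h])
  simp only at heq
  set ca := (g s(v, a)).get (hsome _ he) with hca
  have h1 : ct.f v a = some ca := by
    rw [← hglift v a, hca, Option.some_get]
  have h2 : ct.f v b = some ca := by
    rw [← hglift v b, heq, Option.some_get]
  exact hab (ct.proper v a b ca h1 h2)
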